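/- Let H be a finite group and R a commutative ring. Then Ext^1_{RH}(R, F) = 0 for every flat RH-module F, where R carries the trivial H-action. -/

import Mathlib

open TensorProduct CategoryTheory
universe u

/-! ### Tensor product of a right module and a left module over an arbitrary ring -/

section OT
variable (Λ : Type u) [Ring Λ]
variable (I : Type u) [AddCommGroup I] [Module Λᵐᵒᵖ I]
variable (N : Type u) [AddCommGroup N] [Module Λ N]

/-- Relations defining the tensor product `I ⊗[Λ] N` of a right module and a left module. -/
def otRel : Submodule ℤ (TensorProduct ℤ I N) :=
  Submodule.span ℤ {x | ∃ (l : Λ) (i : I) (n : N),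
    x = (MulOpposite.op l • i) ⊗ₜ[ℤ] n - i ⊗ₜ[ℤ] (l • n)}

/-- The tensor product `I ⊗[Λ] N` of a right `Λ`-module and a left `Λ`-module. -/
abbrev OT := TensorProduct ℤ I N ⧸ otRel Λ I N

variable {Λ I N}
variable {N' : Type u} [AddCommGroup N'] [Module Λ N']
variable {I' : Type u} [AddCommGroup I'] [Module Λᵐᵒᵖ I']

/-- Functoriality of `OT` in the left-module variable. -/
noncomputable def OTmap (f : N →ₗ[Λ] N') : OT Λ I N →ₗ[ℤ] OT Λ I N' :=
  Submodule.mapQ _ _ (LinearMap.lTensor I f.toAddMonoidHom.toIntLinearMap) <| by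
    refine Submodule.span_le.2 ?_
    rintro x ⟨l, i, n, rfl⟩
    refine Submodule.subset_span ⟨l, i, f n, ?_⟩
    erw [map_sub, LinearMap.lTensor_tmul, LinearMap.lTensor_tmul]
    simp [map_smul]

/-- Functoriality of `OT` in the right-module variable. -/
noncomputable def OTmapL (f : I →ₗ[Λᵐᵒᵖ] I') (N : Type u) [AddCommGroup N] [Module Λ N] :
    OT Λ I N →ₗ[ℤ] OT Λ I' N :=
  Submodule.mapQ _ _ (LinearMap.rTensor N f.toAddMonoidHom.toIntLinearMap) <| by
    refine Submodule.span_le.2 ?_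
    rintro x ⟨l, i, n, rfl⟩
    refine Submodule.subset_span ⟨l, f i, n, ?_⟩
    erw [map_sub, LinearMap.rTensor_tmul, LinearMap.rTensor_tmul]
    simp [map_smul]
end OT

/-! ### Flatness, Gorenstein flatness and the various homological dimensions -/

section GF
variable (Λ : Type u) [Ring Λ]

/-- A left `Λ`-module `M` is flat if tensoring with it preserves injectivity of maps of
right `Λ`-modules. -/
def IsFlat (M : ModuleCat.{u} Λ) : Prop :=
  ∀ (A B : ModuleCat.{u} Λᵐᵒᵖ) (f : A →ₗ[Λᵐᵒᵖ] B), Function.Injective f →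
    Function.Injective (OTmapL (Λ := Λ) f M)

/-- An acyclic complex of flat left `Λ`-modules. -/
structure FlatCx : Type (u + 1) where
  X : ℤ → ModuleCat.{u} Λ
  d : ∀ i : ℤ, X (i + 1) →ₗ[Λ] X i
  flat : ∀ i, IsFlat Λ (X i)
  acyclic : ∀ i : ℤ, Function.Exact (d (i + 1)) (d i)

/-- Total acyclicity: `I ⊗[Λ] -` preserves acyclicity for every injective right module `I`. -/
def FlatCx.TotAcyclic (C : FlatCx Λ) : Prop :=
  ∀ (I : ModuleCat.{u} Λᵐᵒᵖ), Module.Injective Λᵐᵒᵖ I →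
    ∀ i : ℤ, Function.Exact (OTmap (I := I) (C.d (i + 1))) (OTmap (I := I) (C.d i))

/-- Gorenstein flat modules: cycles of totally acyclic complexes of flat modules. -/
def IsGF (M : ModuleCat.{u} Λ) : Prop :=
  ∃ C : FlatCx Λ, C.TotAcyclic ∧ ∃ i : ℤ, Nonempty (M ≃ₗ[Λ] LinearMap.ker (C.d i))

/-- Gorenstein flat dimension at most `n`. -/
def GfdLE : ℕ → ModuleCat.{u} Λ → Prop
  | 0, M => IsGF Λ M
  | n + 1, M => ∃ (F : ModuleCat.{u} Λ) (p : F →ₗ[Λ] M), Function.Surjective p ∧ IsGF Λ F ∧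
      GfdLE n (ModuleCat.of Λ (LinearMap.ker p))

/-- The Gorenstein flat dimension, as an extended natural number. -/
noncomputable def gfd (M : ModuleCat.{u} Λ) : ℕ∞ := sInf ((↑) '' {n : ℕ | GfdLE Λ n M})

/-- Flat dimension at most `n`. -/
def FdLE : ℕ → ModuleCat.{u} Λ → Prop
  | 0, M => IsFlat Λ M
  | n + 1, M => ∃ (F : ModuleCat.{u} Λ) (p : F →ₗ[Λ] M), Function.Surjective p ∧ IsFlat Λ F ∧
      FdLE n (ModuleCat.of Λ (LinearMap.ker p))

/-- The flat dimension, as an extended natural number. -/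
noncomputable def fdim (M : ModuleCat.{u} Λ) : ℕ∞ := sInf ((↑) '' {n : ℕ | FdLE Λ n M})

/-- Projective dimension at most `n`. -/
def PdLE : ℕ → ModuleCat.{u} Λ → Prop
  | 0, M => Module.Projective Λ M
  | n + 1, M => ∃ (F : ModuleCat.{u} Λ) (p : F →ₗ[Λ] M), Function.Surjective p ∧
      Module.Projective Λ F ∧ PdLE n (ModuleCat.of Λ (LinearMap.ker p))

/-- The projective dimension, as an extended natural number. -/
noncomputable def pdim (M : ModuleCat.{u} Λ) : ℕ∞ := sInf ((↑) '' {n : ℕ | PdLE Λ n M})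

/-- Injective dimension at most `n`. -/
def IdLE : ℕ → ModuleCat.{u} Λ → Prop
  | 0, M => Module.Injective Λ M
  | n + 1, M => ∃ (J : ModuleCat.{u} Λ) (j : M →ₗ[Λ] J), Function.Injective j ∧
      Module.Injective Λ J ∧ IdLE n (ModuleCat.of Λ (J ⧸ LinearMap.range j))

/-- The injective dimension, as an extended natural number. -/
noncomputable def idim (M : ModuleCat.{u} Λ) : ℕ∞ := sInf ((↑) '' {n : ℕ | IdLE Λ n M})

/-- `sfli Λ`: the supremum of the flat dimensions of injective left `Λ`-modules. -/
noncomputable def sfli : ℕ∞ := ⨆ (I : ModuleCat.{u} Λ) (_ : Module.Injective Λ I), fdim Λ I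
/-- `silf Λ`: the supremum of the injective dimensions of flat left `Λ`-modules. -/
noncomputable def silf : ℕ∞ := ⨆ (F : ModuleCat.{u} Λ) (_ : IsFlat Λ F), idim Λ F
/-- `spli Λ`: the supremum of the projective dimensions of injective left `Λ`-modules. -/
noncomputable def spli : ℕ∞ := ⨆ (I : ModuleCat.{u} Λ) (_ : Module.Injective Λ I), pdim Λ I
/-- `silp Λ`: the supremum of the injective dimensions of projective left `Λ`-modules. -/
noncomputable def silp : ℕ∞ := ⨆ (P : ModuleCat.{u} Λ) (_ : Module.Projective Λ P), idim Λ P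
/-- `splf Λ`: the supremum of the projective dimensions of flat left `Λ`-modules. -/
noncomputable def splf : ℕ∞ := ⨆ (F : ModuleCat.{u} Λ) (_ : IsFlat Λ F), pdim Λ F
/-- The weak global dimension. -/
noncomputable def wgldim : ℕ∞ := ⨆ (M : ModuleCat.{u} Λ), fdim Λ M
/-- The Gorenstein weak global dimension. -/
noncomputable def Gwgldim : ℕ∞ := ⨆ (M : ModuleCat.{u} Λ), gfd Λ M
end GF

/-! ### Gorenstein projective and PGF modules -/

section GP
variable (Λ : Type u) [Ring Λ]

/-- An acyclic complex of projective left `Λ`-modules. -/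
structure ProjCx : Type (u + 1) where
  X : ℤ → ModuleCat.{u} Λ
  d : ∀ i : ℤ, X (i + 1) →ₗ[Λ] X i
  proj : ∀ i, Module.Projective Λ (X i)
  acyclic : ∀ i : ℤ, Function.Exact (d (i + 1)) (d i)

/-- The complex stays acyclic after applying `Hom(-, Q)` for every projective `Q`. -/
def ProjCx.HomTotAcyclic (C : ProjCx Λ) : Prop :=
  ∀ (Q : ModuleCat.{u} Λ), Module.Projective Λ Q →
    ∀ i : ℤ, Function.Exact (fun g : C.X i →ₗ[Λ] Q => g ∘ₗ C.d i)
      (fun g : C.X (i + 1) →ₗ[Λ] Q => g ∘ₗ C.d (i + 1))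

/-- The complex stays acyclic after applying `I ⊗[Λ] -` for every injective right module `I`. -/
def ProjCx.TensTotAcyclic (C : ProjCx Λ) : Prop :=
  ∀ (I : ModuleCat.{u} Λᵐᵒᵖ), Module.Injective Λᵐᵒᵖ I →
    ∀ i : ℤ, Function.Exact (OTmap (I := I) (C.d (i + 1))) (OTmap (I := I) (C.d i))

/-- Gorenstein projective modules. -/
def IsGP (M : ModuleCat.{u} Λ) : Prop :=
  ∃ C : ProjCx Λ, C.HomTotAcyclic ∧ ∃ i : ℤ, Nonempty (M ≃ₗ[Λ] LinearMap.ker (C.d i))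

/-- Projectively coresolved Gorenstein flat (PGF) modules. -/
def IsPGF (M : ModuleCat.{u} Λ) : Prop :=
  ∃ C : ProjCx Λ, C.TensTotAcyclic ∧ ∃ i : ℤ, Nonempty (M ≃ₗ[Λ] LinearMap.ker (C.d i))

/-- Gorenstein projective dimension at most `n`. -/
def GpdLE : ℕ → ModuleCat.{u} Λ → Prop
  | 0, M => IsGP Λ M
  | n + 1, M => ∃ (F : ModuleCat.{u} Λ) (p : F →ₗ[Λ] M), Function.Surjective p ∧ IsGP Λ F ∧
      GpdLE n (ModuleCat.of Λ (LinearMap.ker p))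

/-- The Gorenstein projective dimension. -/
noncomputable def gpd (M : ModuleCat.{u} Λ) : ℕ∞ := sInf ((↑) '' {n : ℕ | GpdLE Λ n M})

/-- PGF dimension at most `n`. -/
def PGFdLE : ℕ → ModuleCat.{u} Λ → Prop
  | 0, M => IsPGF Λ M
  | n + 1, M => ∃ (F : ModuleCat.{u} Λ) (p : F →ₗ[Λ] M), Function.Surjective p ∧ IsPGF Λ F ∧
      PGFdLE n (ModuleCat.of Λ (LinearMap.ker p))

/-- The PGF dimension. -/
noncomputable def pgfd (M : ModuleCat.{u} Λ) : ℕ∞ := sInf ((↑) '' {n : ℕ | PGFdLE Λ n M})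

/-- The Gorenstein global dimension. -/
noncomputable def Ggldim : ℕ∞ := ⨆ (M : ModuleCat.{u} Λ), gpd Λ M
/-- The PGF global dimension. -/
noncomputable def PGFgldim : ℕ∞ := ⨆ (M : ModuleCat.{u} Λ), pgfd Λ M
end GP

/-! ### Tor -/

section Tor
variable (Λ : Type u) [Ring Λ]

/-- Vanishing of `Tor_n^Λ(I, M)`, defined through dimension shifting along flat covers. -/
def TorVanish (I : ModuleCat.{u} Λᵐᵒᵖ) : ℕ → ModuleCat.{u} Λ → Prop
  | 0, M => Subsingleton (OT Λ I M)
  | 1, M => ∃ (F : ModuleCat.{u} Λ) (p : F →ₗ[Λ] M), Function.Surjective p ∧ IsFlat Λ F ∧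
      Function.Injective (OTmap (I := I) (LinearMap.ker p).subtype)
  | n + 2, M => ∃ (F : ModuleCat.{u} Λ) (p : F →ₗ[Λ] M), Function.Surjective p ∧ IsFlat Λ F ∧
      TorVanish I (n + 1) (ModuleCat.of Λ (LinearMap.ker p))
end Tor

/-! ### Group rings -/

section Grp
variable (R : Type u) [CommRing R] (G : Type u) [Group G]

/-- `R` as a module over the group ring `MonoidAlgebra R G` with trivial `G`-action. -/
noncomputable def trivSMul : Module (MonoidAlgebra R G) R :=
  Module.compHom R ((MonoidAlgebra.lift R R G) 1).toRingHom

/-- The trivial `MonoidAlgebra R G`-module `R`. -/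
noncomputable def trivMod : ModuleCat.{u} (MonoidAlgebra R G) :=
  @ModuleCat.of (MonoidAlgebra R G) _ R _ (trivSMul R G)

/-- Restriction of scalars from `MonoidAlgebra R G`-modules to `R`-modules. -/
noncomputable def resR : ModuleCat.{u} (MonoidAlgebra R G) ⥤ ModuleCat.{u} R :=
  ModuleCat.restrictScalars (algebraMap R (MonoidAlgebra R G))

/-- The Gorenstein homological dimension of the group `G` over `R`. -/
noncomputable def Ghd : ℕ∞ := gfd (MonoidAlgebra R G) (trivMod R G)
end Grp

/-!
STATEMENT 12: Let `H` be a finite group and `R` a commutative ring.  Then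
`Ext¹_{RH}(R, F) = 0` for every flat `RH`-module `F`, where `R` carries the trivial
`H`-action.  Vanishing of `Ext¹` is expressed by the splitting of every short exact
sequence `0 → F → E → R → 0` of `RH`-modules.
-/

section AuxOT
open MulOpposite LinearMap

variable {Λ : Type u} [Ring Λ]
variable {N : Type u} [AddCommGroup N] [Module Λ N]

lemma otMk_rel {I : Type u} [AddCommGroup I] [Module Λᵐᵒᵖ I] (l : Λ) (w : I) (n : N) :
    (Submodule.Quotient.mk ((op l • w) ⊗ₜ[ℤ] n) : OT Λ I N) =
      Submodule.Quotient.mk (w ⊗ₜ[ℤ] (l • n)) := by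
  rw [Submodule.Quotient.eq]
  exact Submodule.subset_span ⟨l, w, n, rfl⟩

lemma OTmapL_mk {I I' : Type u} [AddCommGroup I] [Module Λᵐᵒᵖ I] [AddCommGroup I']
    [Module Λᵐᵒᵖ I'] (f : I →ₗ[Λᵐᵒᵖ] I') (t : TensorProduct ℤ I N) :
    OTmapL f N (Submodule.Quotient.mk t) =
      Submodule.Quotient.mk (LinearMap.rTensor N f.toAddMonoidHom.toIntLinearMap t) := rfl

lemma OT_exact {I : Type u} [AddCommGroup I] [Module Λᵐᵒᵖ I] (K : Submodule Λᵐᵒᵖ I)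
    (z : OT Λ I N) (hz : OTmapL K.mkQ N z = 0) :
    ∃ y : OT Λ (↥K) N, OTmapL K.subtype N y = z := by
  obtain ⟨t, rfl⟩ := Submodule.Quotient.mk_surjective _ z
  rw [OTmapL_mk, Submodule.Quotient.mk_eq_zero] at hz
  set g : I →ₗ[ℤ] (I ⧸ K) := K.mkQ.toAddMonoidHom.toIntLinearMap with hg
  set f : (↥K) →ₗ[ℤ] I := K.subtype.toAddMonoidHom.toIntLinearMap with hf
  have hmap : otRel Λ (I ⧸ K) N = Submodule.map (LinearMap.rTensor N g) (otRel Λ I N) := by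
    apply le_antisymm
    · erw [otRel, Submodule.span_le]
      rintro x ⟨l, w, n, rfl⟩
      obtain ⟨c, rfl⟩ := Submodule.Quotient.mk_surjective K w
      refine ⟨(op l • c) ⊗ₜ[ℤ] n - c ⊗ₜ[ℤ] (l • n),
        Submodule.subset_span ⟨l, c, n, rfl⟩, ?_⟩
      simp only [map_sub, LinearMap.rTensor_tmul]
      rfl
    · erw [otRel, Submodule.map_span, Submodule.span_le]
      rintro x ⟨y, ⟨l, w, n, rfl⟩, rfl⟩
      refine Submodule.subset_span ⟨l, Submodule.Quotient.mk w, n, ?_⟩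
      simp only [map_sub, LinearMap.rTensor_tmul]
      rfl
  rw [hmap] at hz
  obtain ⟨u, hu, huz⟩ := hz
  have hker : LinearMap.rTensor N g (t - u) = 0 := by
    rw [map_sub, huz, sub_self]
  have hexfg : Function.Exact f g := by
    intro x
    constructor
    · intro hx
      have hxK : x ∈ K := (Submodule.Quotient.mk_eq_zero K).mp hx
      exact ⟨⟨x, hxK⟩, rfl⟩
    · rintro ⟨y, rfl⟩
      exact (Submodule.Quotient.mk_eq_zero K).mpr y.2
  have hexact := rTensor_exact (R := ℤ) N hexfg
    (Submodule.mkQ_surjective K)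
  obtain ⟨s, hs⟩ := (hexact (t - u)).mp hker
  refine ⟨Submodule.Quotient.mk s, ?_⟩
  rw [OTmapL_mk, ← hf, hs, Submodule.Quotient.eq]
  have h2 : t - u - t = -u := by abel
  rw [h2]
  exact neg_mem hu

end AuxOT


section AuxEv
open MulOpposite LinearMap

variable {Λ : Type u} [Ring Λ]
variable {N : Type u} [AddCommGroup N] [Module Λ N]
variable {ι : Type u} [Fintype ι]

/-- The evaluation bilinear map `(ι → Λ) → N → (ι → N)`. -/
noncomputable def evBil : (ι → Λ) →ₗ[ℤ] N →ₗ[ℤ] (ι → N) where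
  toFun w :=
    { toFun := fun n i => w i • n
      map_add' := fun a b => by funext i; exact smul_add _ _ _
      map_smul' := fun z n => by
        funext i
        show w i • (z • n) = z • (w i • n)
        exact map_zsmul (DistribMulAction.toAddMonoidHom N (w i)) z n }
  map_add' a b := by
    ext n i
    show ((a + b) i) • n = a i • n + b i • n
    rw [Pi.add_apply, add_smul]
  map_smul' z w := by
    ext n i
    show ((z • w) i) • n = z • (w i • n)
    rw [Pi.smul_apply, zsmul_eq_mul, mul_smul, Int.cast_smul_eq_zsmul]

/-- Evaluation map on the tensor product `OT`. -/
noncomputable def OTev : OT Λ (ι → Λ) N →ₗ[ℤ] (ι → N) :=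
  Submodule.liftQ _ (TensorProduct.lift (evBil (Λ := Λ) (N := N) (ι := ι))) <| by
    rw [otRel, Submodule.span_le]
    rintro x ⟨l, w, n, rfl⟩
    simp only [SetLike.mem_coe, LinearMap.mem_ker, map_sub, TensorProduct.lift.tmul]
    funext i
    erw [map_sub, TensorProduct.lift.tmul, TensorProduct.lift.tmul]
    show (op l • w) i • n - w i • (l • n) = 0
    rw [Pi.smul_apply, MulOpposite.smul_eq_mul_unop, unop_op, mul_smul, sub_self]

lemma OTev_mk (w : ι → Λ) (n : N) :
    OTev (Λ := Λ) (N := N) (ι := ι) (Submodule.Quotient.mk (w ⊗ₜ[ℤ] n))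
      = fun i => w i • n := rfl

end AuxEv

section AuxFlat
open MulOpposite LinearMap

variable {Λ : Type u} [Ring Λ]

lemma mk_sum {M : Type*} [AddCommGroup M] [Module ℤ M] (p : Submodule ℤ M)
    {α : Type*} (s : Finset α) (g : α → M) :
    (Submodule.Quotient.mk (∑ a ∈ s, g a) : M ⧸ p)
      = ∑ a ∈ s, (Submodule.Quotient.mk (g a) : M ⧸ p) :=
  map_sum p.mkQ g s

/-- The equational criterion for flatness. -/
lemma flat_equational {F : ModuleCat.{u} Λ} (hF : IsFlat Λ F)
    {ι κ : Type u} [Fintype ι] [Fintype κ] [DecidableEq ι]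
    (lam : κ → ι → Λ) (f : ι → F)
    (hrel : ∀ k, ∑ i, lam k i • f i = 0) :
    ∃ (m : ℕ) (a : Fin m → ι → Λ) (y : Fin m → F),
      (∀ i, f i = ∑ j, a j i • y j) ∧ (∀ j k, ∑ i, lam k i * a j i = 0) := by
  classical
  let μ : (ι → Λ) →ₗ[Λᵐᵒᵖ] (κ → Λ) :=
    { toFun := fun a k => ∑ i, lam k i * a i
      map_add' := fun a b => by
        funext k
        simp [mul_add, Finset.sum_add_distrib]
      map_smul' := fun c a => by
        funext k
        simp only [RingHom.id_apply, Pi.smul_apply, MulOpposite.smul_eq_mul_unop,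
          Finset.sum_mul, mul_assoc] }
  set K : Submodule Λᵐᵒᵖ (ι → Λ) := LinearMap.ker μ with hK
  let μbar : ((ι → Λ) ⧸ K) →ₗ[Λᵐᵒᵖ] (κ → Λ) := K.liftQ μ le_rfl
  have hinj : Function.Injective μbar := by
    rw [← LinearMap.ker_eq_bot]
    exact Submodule.ker_liftQ_eq_bot _ _ _ le_rfl
  have hOT := hF (ModuleCat.of Λᵐᵒᵖ ((ι → Λ) ⧸ K)) (ModuleCat.of Λᵐᵒᵖ (κ → Λ)) μbar hinj
  set t : TensorProduct ℤ (ι → Λ) F := ∑ i, (Pi.single i (1 : Λ)) ⊗ₜ[ℤ] f i with ht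
  set z : OT Λ (ι → Λ) F := Submodule.Quotient.mk t with hz
  -- `OTmapL μ` kills `z`
  have hzero : OTmapL μ F z = 0 := by
    rw [hz, OTmapL_mk, ht, map_sum, mk_sum]
    have hsingle : ∀ i : ι, (μ (Pi.single i 1)) = ∑ k, op (lam k i) • Pi.single k (1 : Λ) := by
      intro i
      funext k'
      simp only [μ, LinearMap.coe_mk, AddHom.coe_mk]
      rw [Finset.sum_apply]
      have hLsum : ∑ j, lam k' j * (Pi.single i 1 : ι → Λ) j = lam k' i := by
        rw [Finset.sum_eq_single i]
        · rw [Pi.single_eq_same, mul_one]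
        · intro b _ hb
          rw [Pi.single_eq_of_ne hb, mul_zero]
        · intro h
          exact absurd (Finset.mem_univ i) h
      have hRsum : ∑ k, (op (lam k i) • Pi.single k (1 : Λ)) k' = lam k' i := by
        rw [Finset.sum_eq_single k']
        · rw [Pi.smul_apply, Pi.single_eq_same, MulOpposite.smul_eq_mul_unop, unop_op, one_mul]
        · intro b _ hb
          rw [Pi.smul_apply, Pi.single_eq_of_ne (Ne.symm hb), MulOpposite.smul_eq_mul_unop,
            zero_mul]
        · intro h
          exact absurd (Finset.mem_univ k') h
      rw [hLsum, hRsum]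
    have hterm : ∀ i : ι,
        (Submodule.Quotient.mk (rTensor F μ.toAddMonoidHom.toIntLinearMap
            ((Pi.single i (1 : Λ)) ⊗ₜ[ℤ] f i)) : OT Λ (κ → Λ) F) =
          ∑ k, Submodule.Quotient.mk ((Pi.single k (1 : Λ)) ⊗ₜ[ℤ] (lam k i • f i)) := by
      intro i
      rw [rTensor_tmul]
      show (Submodule.Quotient.mk ((μ (Pi.single i 1)) ⊗ₜ[ℤ] f i) : OT Λ (κ → Λ) F) = _
      rw [hsingle i, TensorProduct.sum_tmul]
      rw [mk_sum]
      exact Finset.sum_congr rfl fun k _ => otMk_rel _ _ _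
    calc (∑ i, (Submodule.Quotient.mk (rTensor F μ.toAddMonoidHom.toIntLinearMap
            ((Pi.single i (1 : Λ)) ⊗ₜ[ℤ] f i)) : OT Λ (κ → Λ) F))
        = ∑ i, ∑ k, (Submodule.Quotient.mk ((Pi.single k (1 : Λ)) ⊗ₜ[ℤ] (lam k i • f i)) :
            OT Λ (κ → Λ) F) := Finset.sum_congr rfl fun i _ => hterm i
      _ = ∑ k, ∑ i, (Submodule.Quotient.mk ((Pi.single k (1 : Λ)) ⊗ₜ[ℤ] (lam k i • f i)) :
            OT Λ (κ → Λ) F) := Finset.sum_comm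
      _ = ∑ k : κ, (Submodule.Quotient.mk ((Pi.single k (1 : Λ)) ⊗ₜ[ℤ]
            (∑ i, lam k i • f i)) : OT Λ (κ → Λ) F) := by
            refine Finset.sum_congr rfl fun k _ => ?_
            rw [TensorProduct.tmul_sum]
            exact (mk_sum _ _ _).symm
      _ = 0 := by
            refine Finset.sum_eq_zero fun k _ => ?_
            rw [hrel k, TensorProduct.tmul_zero]
            rfl
  -- hence `OTmapL K.mkQ` kills `z`
  have hcomp : OTmapL μbar F (OTmapL K.mkQ F z) = OTmapL μ F z := by
    rw [hz, OTmapL_mk, OTmapL_mk, OTmapL_mk]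
    congr 1
    have hc : μbar.toAddMonoidHom.toIntLinearMap ∘ₗ K.mkQ.toAddMonoidHom.toIntLinearMap
        = μ.toAddMonoidHom.toIntLinearMap := LinearMap.ext fun x => rfl
    rw [← hc, LinearMap.rTensor_comp]
    rfl
  have hmkQ : OTmapL K.mkQ F z = 0 :=
    hOT (show OTmapL μbar F (OTmapL K.mkQ F z) = OTmapL μbar F 0 by
      rw [hcomp, hzero, map_zero])
  obtain ⟨y, hy⟩ := OT_exact K z hmkQ
  obtain ⟨s, rfl⟩ := Submodule.Quotient.mk_surjective _ y
  obtain ⟨S, rfl⟩ := TensorProduct.exists_finset s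
  -- read off the coefficients
  have key : ∀ i, f i = ∑ wy ∈ S, (wy.1 : ι → Λ) i • wy.2 := by
    intro i
    have h0 := congrFun (congrArg (DFunLike.coe (OTev (Λ := Λ) (N := F) (ι := ι))) hy) i
    rw [OTmapL_mk, map_sum] at h0
    have hL : OTev (Λ := Λ) (N := F) (ι := ι) (Submodule.Quotient.mk (∑ wy ∈ S,
        rTensor F K.subtype.toAddMonoidHom.toIntLinearMap (wy.1 ⊗ₜ[ℤ] wy.2))) i
        = ∑ wy ∈ S, (wy.1 : ι → Λ) i • wy.2 := by
      rw [mk_sum, map_sum]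
      rw [Finset.sum_apply]
      refine Finset.sum_congr rfl fun wy _ => ?_
      rw [rTensor_tmul]
      exact congrFun (OTev_mk _ _) i
    have hR : OTev (Λ := Λ) (N := F) (ι := ι) z i = f i := by
      rw [hz, ht]
      rw [mk_sum, map_sum, Finset.sum_apply]
      rw [Finset.sum_congr rfl fun i' (_ : i' ∈ Finset.univ) =>
        congrFun (OTev_mk (Pi.single i' (1:Λ)) (f i')) i]
      simp [Pi.single_apply]
    rw [hL] at h0
    rw [hR] at h0
    exact h0.symm
  -- convert the finset sum into a `Fin m`-indexed sum
  let e := S.equivFin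
  refine ⟨S.card, fun j => ((e.symm j : ↥K × F).1 : ι → Λ), fun j => (e.symm j : ↥K × F).2,
    fun i => ?_, fun j k => ?_⟩
  · rw [key i]
    rw [← Finset.sum_coe_sort S (fun wy => (wy.1 : ι → Λ) i • wy.2)]
    exact (Equiv.sum_comp e.symm _).symm
  · have hker : μ ((e.symm j : ↥K × F).1 : ι → Λ) = 0 := (e.symm j).1.1.2
    exact congrFun hker k
end AuxFlat


section AuxH1
variable {R : Type u} [CommRing R] {H : Type u} [Group H] [Fintype H]

/-- Every cocycle with values in the group algebra itself is a coboundary. -/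
lemma h1_vanish (a : H → MonoidAlgebra R H)
    (hc : ∀ g h : H, MonoidAlgebra.of R H g * a h - a (g * h) + a g = 0) :
    ∃ b : MonoidAlgebra R H, ∀ h, a h = MonoidAlgebra.of R H h * b - b := by
  classical
  refine ⟨-∑ t : H, MonoidAlgebra.single t ((a t).coeff t), fun h => ?_⟩
  ext k
  have hc2 := hc h (h⁻¹ * k)
  rw [sub_add_eq_add_sub, mul_inv_cancel_left] at hc2
  have hc2' := sub_eq_zero.mp hc2
  have hc3 := congrArg (fun f : MonoidAlgebra R H => f.coeff k) hc2'
  have hc4 : (MonoidAlgebra.single h (1 : R) * a (h⁻¹ * k)).coeff k + (a h).coeff k = (a k).coeff k := hc3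
  rw [MonoidAlgebra.coeff_single_mul_apply, one_mul] at hc4
  have hbapp : ∀ t : H, ((-∑ t' : H, MonoidAlgebra.single t' ((a t').coeff t') :
      MonoidAlgebra R H)).coeff t = -((a t).coeff t) := by
    intro t
    rw [MonoidAlgebra.coeff_neg, MonoidAlgebra.coeff_sum, Finsupp.neg_apply, Finsupp.finset_sum_apply]
    congr 1
    rw [Finset.sum_eq_single t]
    · rw [MonoidAlgebra.coeff_single, Finsupp.single_eq_same]
    · intro b _ hb
      simp [MonoidAlgebra.coeff_single, Finsupp.single_apply, hb, Ne.symm hb]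
    · intro hmem
      exact absurd (Finset.mem_univ t) hmem
  rw [MonoidAlgebra.coeff_sub, Finsupp.sub_apply]
  simp only [MonoidAlgebra.of_apply, MonoidAlgebra.coeff_single_mul_apply, one_mul]
  rw [hbapp, hbapp]
  linear_combination hc4

end AuxH1


section AuxSum
variable {R : Type u} [CommRing R] {H : Type u} [Group H] [Fintype H]

open MonoidAlgebra in
/-- The relation coefficients for the cocycle equations. -/
noncomputable def lamRel (gh : H × H) (h' : H) : MonoidAlgebra R H :=
  letI := Classical.decEq H
  (if h' = gh.2 then MonoidAlgebra.of R H gh.1 else 0) -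
    (if h' = gh.1 * gh.2 then 1 else 0) + (if h' = gh.1 then 1 else 0)

lemma lamRel_sum {M : Type*} [AddCommGroup M] [Module (MonoidAlgebra R H) M]
    (v : H → M) (g h : H) :
    ∑ h', lamRel (R := R) (g, h) h' • v h' =
      MonoidAlgebra.of R H g • v h - v (g * h) + v g := by
  classical
  have expand : ∀ h', lamRel (R := R) (g, h) h' • v h' =
      (if h' = h then MonoidAlgebra.of R H g • v h' else 0) -
      (if h' = g * h then v h' else 0) + (if h' = g then v h' else 0) := by
    intro h'
    rw [lamRel]
    rw [add_smul, sub_smul]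
    congr 1
    · congr 1
      · split <;> simp
      · split <;> simp
    · split <;> simp
  rw [Finset.sum_congr rfl fun h' _ => expand h']
  rw [Finset.sum_add_distrib, Finset.sum_sub_distrib]
  rw [Finset.sum_ite_eq' Finset.univ h (fun h' => MonoidAlgebra.of R H g • v h'),
    Finset.sum_ite_eq' Finset.univ (g * h) v, Finset.sum_ite_eq' Finset.univ g v]
  simp

end AuxSum

theorem stmt12 (R H : Type u) [CommRing R] [Group H] [Finite H]
    (F : ModuleCat.{u} (MonoidAlgebra R H)) (hF : IsFlat (MonoidAlgebra R H) F)
    (E : ModuleCat.{u} (MonoidAlgebra R H))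
    (i : F →ₗ[MonoidAlgebra R H] E) (p : E →ₗ[MonoidAlgebra R H] trivMod R H)
    (hi : Function.Injective i) (hp : Function.Surjective p) (hex : Function.Exact i p) :
    ∃ s : trivMod R H →ₗ[MonoidAlgebra R H] E, p ∘ₗ s = LinearMap.id := by
  classical
  cases nonempty_fintype H
  set Λ := MonoidAlgebra R H with hΛ
  set ρ : Λ →+* R := ((MonoidAlgebra.lift R R H) 1).toRingHom with hρ
  obtain ⟨e0, he0⟩ := hp (show ↑(trivMod R H) from (1 : R))
  set ofH : H → Λ := fun h => MonoidAlgebra.of R H h with hofH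
  have hρof : ∀ h : H, ρ (ofH h) = 1 := by
    intro h
    show ((MonoidAlgebra.lift R R H) 1) (MonoidAlgebra.of R H h) = 1
    rw [MonoidAlgebra.lift_of]
    rfl
  set c : H → E := fun h => ofH h • e0 - e0 with hc
  have hpc : ∀ h, p (c h) = 0 := by
    intro h
    rw [hc]
    simp only [map_sub, map_smul, he0]
    show ρ (ofH h) * (1 : R) - (1 : R) = (0 : R)
    rw [hρof, one_mul, sub_self]
  choose ff hff using fun h => (hex (c h)).mp (hpc h)
  have hrel0 : ∀ g h : H, ofH g • ff h - ff (g * h) + ff g = 0 := by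
    intro g h
    apply hi
    rw [map_add, map_sub, map_smul, hff, hff, hff, map_zero, hc]
    have hmul : ofH g • (ofH h • e0) = ofH (g * h) • e0 := by
      rw [← mul_smul, hofH]
      congr 1
      exact (map_mul (MonoidAlgebra.of R H) g h).symm
    simp only [smul_sub]
    rw [hmul]
    abel
  have hrel : ∀ gh : H × H, ∑ h', lamRel (R := R) gh h' • ff h' = 0 := by
    rintro ⟨g, h⟩
    rw [lamRel_sum ff g h]
    exact hrel0 g h
  obtain ⟨m, a, y, hay, harel⟩ := flat_equational hF (lamRel (R := R)) ff hrel
  have haj : ∀ j, ∀ g h : H, MonoidAlgebra.of R H g * a j h - a j (g * h) + a j g = 0 := by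
    intro j g h
    have h1 := lamRel_sum (R := R) (a j) g h
    have h2 : ∑ h', lamRel (R := R) (g, h) h' • a j h' = 0 := by
      rw [Finset.sum_congr rfl fun h' _ => smul_eq_mul (α := Λ) _ _]
      exact harel j (g, h)
    have h3 := h1.symm.trans h2
    rw [smul_eq_mul] at h3
    exact h3
  choose b hb using fun j => h1_vanish (a j) (haj j)
  set x : F := ∑ j, b j • y j with hxdef
  have hx : ∀ h, ofH h • x - x = ff h := by
    intro h
    rw [hay h, hxdef, Finset.smul_sum, ← Finset.sum_sub_distrib]
    refine Finset.sum_congr rfl fun j _ => ?_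
    rw [← mul_smul, ← sub_smul, ← hb j h]
  set e : E := e0 - i x with he
  have hpe : p e = (show ↑(trivMod R H) from (1 : R)) := by
    have hpix : p (i x) = 0 := (hex (i x)).mpr ⟨x, rfl⟩
    rw [he, map_sub, he0, hpix, sub_zero]
  have hinv : ∀ h : H, ofH h • e = e := by
    intro h
    rw [he, smul_sub, ← map_smul]
    have h1 : ofH h • e0 = i (ff h) + e0 := by
      rw [hff h, hc]
      rw [sub_add_cancel]
    rw [h1, ← hx h, map_sub]
    abel
  have hkey : ∀ l : Λ, l • e = algebraMap R Λ (ρ l) • e := by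
    intro l
    induction l using MonoidAlgebra.induction_linear with
    | zero => simp
    | add f g hf hg =>
      have h3 : (f + g : Λ) • e = (f : Λ) • e + (g : Λ) • e := add_smul (R := Λ) f g e
      have h4 : ρ (f + g : Λ) = ρ f + ρ g := map_add ρ f g
      have h5 : algebraMap R Λ (ρ f + ρ g)
          = algebraMap R Λ (ρ f) + algebraMap R Λ (ρ g) := map_add _ _ _
      have h6 : (algebraMap R Λ (ρ f) + algebraMap R Λ (ρ g)) • e
          = algebraMap R Λ (ρ f) • e + algebraMap R Λ (ρ g) • e := add_smul _ _ _
      show (f + g : Λ) • e = algebraMap R Λ (ρ (f + g : Λ)) • e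
      rw [h3, h4, h5, h6, hf, hg]
    | single h r =>
      have h1 : (MonoidAlgebra.single h r : Λ) = algebraMap R Λ r * ofH h :=
        MonoidAlgebra.single_eq_algebraMap_mul_of h r
      have h2 : ρ (MonoidAlgebra.single h r : Λ) = r := by
        show ((MonoidAlgebra.lift R R H) 1) (MonoidAlgebra.single h r) = r
        rw [MonoidAlgebra.lift_single]
        show r • (1 : R) = r
        rw [smul_eq_mul, mul_one]
      show (MonoidAlgebra.single h r : Λ) • e = _
      rw [h2, h1, mul_smul, hinv h]
  have hcomm : ∀ (r : R) (l : Λ), l • (algebraMap R Λ r • e) = algebraMap R Λ r • (l • e) := by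
    intro r l
    rw [← mul_smul, ← mul_smul, Algebra.commutes]
  have hρalg : ∀ r : R, ρ (algebraMap R Λ r) = r := by
    intro r
    show ((MonoidAlgebra.lift R R H) 1) (MonoidAlgebra.single 1 r) = r
    rw [MonoidAlgebra.lift_single]
    show r • (1 : R) = r
    rw [smul_eq_mul, mul_one]
  refine ⟨{ toFun := fun r => algebraMap R Λ (show R from r) • e
            map_add' := ?_
            map_smul' := ?_ }, ?_⟩
  · intro r1 r2
    show algebraMap R Λ ((show R from r1) + (show R from r2)) • e = _
    rw [map_add, add_smul]
  · intro l r
    show algebraMap R Λ (ρ l * (show R from r)) • e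
      = l • (algebraMap R Λ (show R from r) • e)
    rw [mul_comm (ρ l), map_mul, mul_smul, ← hkey l, ← hcomm]
  · apply LinearMap.ext
    intro r
    show p (algebraMap R Λ (show R from r) • e) = r
    rw [map_smul, hpe]
    show ρ (algebraMap R Λ (show R from r)) * (1 : R) = (show R from r)
    rw [hρalg, mul_one]
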